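/- Let X be a weighted string of length n over a finite alphabet Σ of size σ ≥ 2 and let 1/z ∈ (0,1] be a weight threshold with z ≥ 1. For a pattern P chosen uniformly at random from Σ^m (with m ≤ n), the probability that P has at least one z-solid occurrence in X is at most (n−m+1)·⌊z⌋/σ^m ≤ n·z/σ^m. -/
import Mathlib


/-- for a weighted string `X` of length `n` over an alphabet of size
`σ ≥ 2` and a weight threshold `1/z` (`z ≥ 1`), the probability that a pattern `P`
chosen uniformly at random from `Σ^m` (with `1 ≤ m ≤ n`) has at least one `z`-solid
occurrence in `X` is at most `(n − m + 1)·⌊z⌋/σ^m ≤ n·z/σ^m`. -/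
theorem prob_random_pattern_solid_le {A : Type*} [Fintype A] [DecidableEq A]
    (hσ : 2 ≤ Fintype.card A)
    (n : ℕ) (X : ℕ → A → ℝ)
    (hX0 : ∀ i < n, ∀ a, 0 ≤ X i a)
    (hX1 : ∀ i < n, ∑ a, X i a = 1)
    (z : ℝ) (hz : 1 ≤ z)
    (m : ℕ) (hm : 1 ≤ m) (hmn : m ≤ n) :
    (Nat.card {P : Fin m → A //
        ∃ i : ℕ, i + m ≤ n ∧ 1 / z ≤ ∏ h : Fin m, X (i + h.val) (P h)} : ℝ)
        / (Fintype.card A : ℝ) ^ m ≤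
      ((n : ℝ) - m + 1) * ⌊z⌋₊ / (Fintype.card A : ℝ) ^ m ∧
    ((n : ℝ) - m + 1) * ⌊z⌋₊ / (Fintype.card A : ℝ) ^ m ≤
      (n : ℝ) * z / (Fintype.card A : ℝ) ^ m := by
  classical
  have hz0 : (0 : ℝ) < z := lt_of_lt_of_le one_pos hz
  have hpow : (0 : ℝ) < (Fintype.card A : ℝ) ^ m := by
    apply pow_pos; exact_mod_cast lt_of_lt_of_le (by norm_num) hσ
  -- per-position bound
  have per : ∀ i : ℕ, i + m ≤ n →
      (Finset.univ.filter
        (fun P : Fin m → A => 1 / z ≤ ∏ h : Fin m, X (i + h.val) (P h))).card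
        ≤ ⌊z⌋₊ := by
    intro i hi
    set s := Finset.univ.filter
        (fun P : Fin m → A => 1 / z ≤ ∏ h : Fin m, X (i + h.val) (P h)) with hs
    have hnn : ∀ P : Fin m → A, 0 ≤ ∏ h : Fin m, X (i + h.val) (P h) := fun P =>
      Finset.prod_nonneg fun h _ => hX0 _ (by omega) _
    have hsum : ∑ P : Fin m → A, ∏ h : Fin m, X (i + h.val) (P h) = 1 := by
      rw [← Fintype.prod_sum]
      exact Finset.prod_eq_one fun h _ => hX1 _ (by omega)
    have hle : (s.card : ℝ) * (1 / z) ≤ 1 := by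
      calc (s.card : ℝ) * (1 / z) = ∑ _P ∈ s, 1 / z := by
              rw [Finset.sum_const, nsmul_eq_mul]
        _ ≤ ∑ P ∈ s, ∏ h : Fin m, X (i + h.val) (P h) :=
              Finset.sum_le_sum fun P hP => (Finset.mem_filter.mp hP).2
        _ ≤ ∑ P : Fin m → A, ∏ h : Fin m, X (i + h.val) (P h) :=
              Finset.sum_le_sum_of_subset_of_nonneg (Finset.subset_univ s)
                fun P _ _ => hnn P
        _ = 1 := hsum
    have : (s.card : ℝ) ≤ z := by
      have := mul_le_mul_of_nonneg_right hle hz0.le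
      rwa [mul_assoc, one_div, inv_mul_cancel₀ hz0.ne', mul_one, one_mul] at this
    exact Nat.le_floor this
  -- union bound
  have hcard : Nat.card {P : Fin m → A //
      ∃ i : ℕ, i + m ≤ n ∧ 1 / z ≤ ∏ h : Fin m, X (i + h.val) (P h)}
      ≤ (n - m + 1) * ⌊z⌋₊ := by
    rw [Nat.card_eq_fintype_card, Fintype.card_subtype]
    have hsub : (Finset.univ.filter (fun P : Fin m → A =>
        ∃ i : ℕ, i + m ≤ n ∧ 1 / z ≤ ∏ h : Fin m, X (i + h.val) (P h))) ⊆
        (Finset.range (n - m + 1)).biUnion (fun i => Finset.univ.filter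
          (fun P : Fin m → A => 1 / z ≤ ∏ h : Fin m, X (i + h.val) (P h))) := by
      intro P hP
      obtain ⟨i, hi, hle⟩ := (Finset.mem_filter.mp hP).2
      exact Finset.mem_biUnion.mpr ⟨i, Finset.mem_range.mpr (by omega),
        Finset.mem_filter.mpr ⟨Finset.mem_univ _, hle⟩⟩
    calc _ ≤ _ := Finset.card_le_card hsub
      _ ≤ ∑ i ∈ Finset.range (n - m + 1), (Finset.univ.filter
          (fun P : Fin m → A => 1 / z ≤ ∏ h : Fin m, X (i + h.val) (P h))).card :=
            Finset.card_biUnion_le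
      _ ≤ ∑ _i ∈ Finset.range (n - m + 1), ⌊z⌋₊ :=
            Finset.sum_le_sum fun i hi => per i (by
              have := Finset.mem_range.mp hi; omega)
      _ = (n - m + 1) * ⌊z⌋₊ := by rw [Finset.sum_const, Finset.card_range, smul_eq_mul]
  have hcast : ((n - m + 1 : ℕ) : ℝ) = (n : ℝ) - m + 1 := by
    push_cast [Nat.cast_sub hmn]; ring
  constructor
  · gcongr ?_ / _
    calc (Nat.card {P : Fin m → A //
        ∃ i : ℕ, i + m ≤ n ∧ 1 / z ≤ ∏ h : Fin m, X (i + h.val) (P h)} : ℝ)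
        ≤ ((n - m + 1) * ⌊z⌋₊ : ℕ) := by exact_mod_cast hcard
      _ = ((n : ℝ) - m + 1) * ⌊z⌋₊ := by push_cast [Nat.cast_sub hmn]; ring
  · gcongr ?_ / _
    have h1 : ((n : ℝ) - m + 1) ≤ n := by
      have : (1 : ℝ) ≤ m := by exact_mod_cast hm
      linarith
    have h2 : (⌊z⌋₊ : ℝ) ≤ z := Nat.floor_le hz0.le
    have h3 : (0 : ℝ) ≤ (n : ℝ) - m + 1 := by
      have : (m : ℝ) ≤ n := by exact_mod_cast hmn
      linarith
    exact mul_le_mul h1 h2 (Nat.cast_nonneg _) (Nat.cast_nonneg _)
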